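/- With the Tom unprojection data below, the row vector L annihilates the matrix M₁: L · M₁ = 0, i.e., for each r ∈ {1,…,16}, Σ_{j=1}^{9} L_j · (c_r)_j = 0. -/
import Mathlib
set_option maxHeartbeats 2000000


open Matrix MvPolynomial

/-- For the Tom unprojection data (the `4×4` Pfaffians `L` of
the extrasymmetric `6×6` matrix and the `9×16` first syzygy matrix `M₁` with
columns `c₁,…,c₁₆`), the row vector `L` annihilates `M₁`: for each column `r`,
`Σ_j L_j · (c_r)_j = 0`. -/
theorem tom_L_annihilates_M₁ (R : Type*) [CommRing R]
    (a b c d e f g h i l : MvPolynomial (Fin 10) R)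
    (hvars : (a, b, c, d, e, f, g, h, i, l) =
      (X 0, X 1, X 2, X 3, X 4, X 5, X 6, X 7, X 8, X 9))
    (L : Fin 9 → MvPolynomial (Fin 10) R)
    (hL : L = ![l*a*c + e*h - f*g, -(l*a*b) - d*h + e*f, l*a^2 + d*g - e^2,
      a*h - b*g + c*e, -(a*f) + b*e - c*d, l*b^2 + d*i - f^2,
      l*b*c + e*i - f*h, l*c^2 + g*i - h^2, a*i - b*h + c*f])
    (M₁ : Matrix (Fin 9) (Fin 16) (MvPolynomial (Fin 10) R))
    (hM₁ : M₁ = (!![0, a, b, d, e, 0, 0, 0, 0;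
      -a, 0, c, e, g, 0, 0, 0, 0;
      -b, -c, 0, f, h, 0, 0, 0, 0;
      -d, -e, -f, 0, -(l*a), 0, 0, 0, 0;
      -e, -g, -h, l*a, 0, 0, 0, 0, 0;
      -h, 0, 0, l*c, 0, 0, g, -e, 0;
      f, -h, 0, -(l*b), l*c, -g, 0, d, 0;
      0, f, 0, 0, -(l*b), e, -d, 0, 0;
      i, 0, 0, 0, 0, 0, -h, f, -(l*c);
      0, i, 0, 0, 0, h, -f, 0, l*b;
      0, h, i, 0, -(l*c), 0, e, -d, -(l*a);
      0, 0, 0, i, 0, 0, -c, b, -h;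
      0, 0, 0, 0, i, c, -b, 0, f;
      0, -b, 0, 0, f, -a, 0, 0, d;
      0, -c, 0, 0, h, 0, -a, 0, e;
      c, 0, 0, -h, 0, 0, 0, -a, g] :
        Matrix (Fin 16) (Fin 9) (MvPolynomial (Fin 10) R))ᵀ)
    : ∀ r : Fin 16, ∑ j : Fin 9, L j * M₁ j r = 0 := by
  subst hL hM₁
  simp only [Fin.forall_fin_succ, Fin.sum_univ_succ, Fin.sum_univ_zero,
    Matrix.transpose_apply, Matrix.of_apply, Matrix.cons_val_zero, Matrix.cons_val_succ,
    Matrix.cons_val', Matrix.cons_val_fin_one, Matrix.empty_val']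
  refine ⟨?_, ?_, ?_, ?_, ?_, ?_, ?_, ?_, ?_, ?_, ?_, ?_, ?_, ?_, ?_, ?_, fun x => x.elim0⟩ <;> ring
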